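/- Let G be a complete graph whose edges are red-blue colored with no blue copy of the fan F_3, let H be a set of 5 vertices inducing a blue complete graph K_5, and let u be a vertex of H. If u has at least 2 blue neighbors outside H, then the blue neighbors of u outside H pairwise induce only red edges (i.e., they form a red clique). -/

import Mathlib

/-- The fan `F n = K₁ + n·K₂`: vertex 0 is the center, and vertices
`2k+1, 2k+2` form the `k`-th edge of the matching, for `k < n`. -/
def fanGraph (n : ℕ) : SimpleGraph (Fin (2 * n + 1)) where
  Adj v w := v ≠ w ∧ (v = 0 ∨ w = 0 ∨ (v.val - 1) / 2 = (w.val - 1) / 2)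
  symm := by
    refine ⟨?_⟩
    intro v w h
    obtain ⟨h1, h2⟩ := h
    refine ⟨h1.symm, ?_⟩
    tauto
  loopless := by refine ⟨?_⟩; intro v h; exact h.1 rfl

/-- `ContainsCopy G H` : `G` contains a subgraph isomorphic to `H`
(an injective map of vertices sending edges of `H` to edges of `G`). -/
def ContainsCopy {α β : Type*} (G : SimpleGraph α) (H : SimpleGraph β) : Prop :=
  ∃ f : β ↪ α, ∀ ⦃a b : β⦄, H.Adj a b → G.Adj (f a) (f b)

lemma fan3_copy {V : Type*} (B : SimpleGraph V) (u x y a b c d : V)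
    (h1 : B.Adj u x) (h2 : B.Adj u y) (h3 : B.Adj u a) (h4 : B.Adj u b)
    (h5 : B.Adj u c) (h6 : B.Adj u d)
    (hxy : B.Adj x y) (hab : B.Adj a b) (hcd : B.Adj c d)
    (nxa : x ≠ a) (nxb : x ≠ b) (nxc : x ≠ c) (nxd : x ≠ d)
    (nya : y ≠ a) (nyb : y ≠ b) (nyc : y ≠ c) (nyd : y ≠ d)
    (nac : a ≠ c) (nad : a ≠ d) (nbc : b ≠ c) (nbd : b ≠ d) :
    ContainsCopy B (fanGraph 3) := by
  let f : Fin 7 → V := ![u, x, y, a, b, c, d]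
  have nux := h1.ne; have nuy := h2.ne; have nua := h3.ne
  have nub := h4.ne; have nuc := h5.ne; have nud := h6.ne
  have nxy := hxy.ne; have nab := hab.ne; have ncd := hcd.ne
  have hinj : Function.Injective f := by
    intro i j hij
    fin_cases i <;> fin_cases j <;>
      first
        | rfl
        | (exact absurd (show _ = _ from hij) (by assumption))
        | (exact absurd (show _ = _ from hij).symm (by assumption))
  refine ⟨⟨f, hinj⟩, ?_⟩
  intro p q hpq
  fin_cases p <;> fin_cases q <;> solve
    | (exfalso; revert hpq; simp only [fanGraph]; decide)
    | (simp only [Function.Embedding.coeFn_mk, f, Matrix.cons_val_zero,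
          Matrix.cons_val_one, Matrix.head_cons, Matrix.cons_val_succ]
       first
        | exact h1 | exact h2 | exact h3 | exact h4 | exact h5 | exact h6
        | exact h1.symm | exact h2.symm | exact h3.symm | exact h4.symm
        | exact h5.symm | exact h6.symm
        | exact hxy | exact hxy.symm | exact hab | exact hab.symm
        | exact hcd | exact hcd.symm)

/-- In a red-blue coloring of a complete graph with no blue `F₃`, if `H` is a set
of 5 vertices inducing a blue `K₅` and `u ∈ H` has at least 2 blue neighbors
outside `H`, then the blue neighbors of `u` outside `H` form a red clique. -/
theorem blue_nbrs_outside_form_red_clique {V : Type*} [Fintype V]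
    (R : SimpleGraph V) (hblue : ¬ ContainsCopy Rᶜ (fanGraph 3))
    (H : Finset V) (hH : H.card = 5)
    (hK5 : ∀ a ∈ H, ∀ b ∈ H, a ≠ b → Rᶜ.Adj a b)
    (u : V) (hu : u ∈ H)
    (hnb : 2 ≤ {w : V | w ∉ H ∧ Rᶜ.Adj u w}.ncard) :
    ∀ x ∈ {w : V | w ∉ H ∧ Rᶜ.Adj u w}, ∀ y ∈ {w : V | w ∉ H ∧ Rᶜ.Adj u w},
      x ≠ y → R.Adj x y := by
  classical
  intro x hx y hy hxy
  by_contra hred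
  simp only [Set.mem_setOf_eq] at hx hy
  obtain ⟨hxH, hux⟩ := hx
  obtain ⟨hyH, huy⟩ := hy
  have hbxy : Rᶜ.Adj x y := ⟨hxy, hred⟩
  -- extract 4 vertices of H other than u
  have hcard : (H.erase u).card = 4 := by
    rw [Finset.card_erase_of_mem hu, hH]
  obtain ⟨a, ha⟩ : ∃ a, a ∈ H.erase u := Finset.card_pos.mp (by omega) |>.imp (fun _ h => h)
  have hcard3 : ((H.erase u).erase a).card = 3 := by
    rw [Finset.card_erase_of_mem ha, hcard]
  obtain ⟨b, c, d, hbc, hbd, hcd, heq⟩ := Finset.card_eq_three.mp hcard3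
  have hb : b ∈ (H.erase u).erase a := by rw [heq]; simp
  have hc : c ∈ (H.erase u).erase a := by rw [heq]; simp
  have hd : d ∈ (H.erase u).erase a := by rw [heq]; simp
  have haH : a ∈ H := Finset.mem_of_mem_erase ha
  have hbH : b ∈ H := Finset.mem_of_mem_erase (Finset.mem_of_mem_erase hb)
  have hcH : c ∈ H := Finset.mem_of_mem_erase (Finset.mem_of_mem_erase hc)
  have hdH : d ∈ H := Finset.mem_of_mem_erase (Finset.mem_of_mem_erase hd)
  have hau : a ≠ u := Finset.ne_of_mem_erase ha
  have hbu : b ≠ u := Finset.ne_of_mem_erase (Finset.mem_of_mem_erase hb)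
  have hcu : c ≠ u := Finset.ne_of_mem_erase (Finset.mem_of_mem_erase hc)
  have hdu : d ≠ u := Finset.ne_of_mem_erase (Finset.mem_of_mem_erase hd)
  have hba : b ≠ a := Finset.ne_of_mem_erase hb
  have hca : c ≠ a := Finset.ne_of_mem_erase hc
  have hda : d ≠ a := Finset.ne_of_mem_erase hd
  exact hblue (fan3_copy Rᶜ u x y a b c d hux huy
    (hK5 u hu a haH hau.symm) (hK5 u hu b hbH hbu.symm)
    (hK5 u hu c hcH hcu.symm) (hK5 u hu d hdH hdu.symm)
    hbxy (hK5 a haH b hbH hba.symm) (hK5 c hcH d hdH hcd)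
    (fun h => hxH (h ▸ haH)) (fun h => hxH (h ▸ hbH))
    (fun h => hxH (h ▸ hcH)) (fun h => hxH (h ▸ hdH))
    (fun h => hyH (h ▸ haH)) (fun h => hyH (h ▸ hbH))
    (fun h => hyH (h ▸ hcH)) (fun h => hyH (h ▸ hdH))
    hca.symm hda.symm hbc hbd)
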